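/- For every p ∈ (0, 1/2) there exists a constant C_p > 0 such that for all real numbers a and b with b ≠ 0, the integral over θ ∈ [0, 2π] of |a + b·cos θ|^{-p} dθ is at most C_p · |b|^{-p}. -/

import Mathlib

open MeasureTheory Real

private lemma cos_quad_lb {θ θ₀ : ℝ} (hθ : θ ∈ Set.Icc 0 π) (h₀ : θ₀ ∈ Set.Icc 0 π) :
    2 / π ^ 2 * (θ - θ₀) ^ 2 ≤ |Real.cos θ - Real.cos θ₀| := by
  have hπ := Real.pi_pos
  wlog h : θ₀ ≤ θ generalizing θ θ₀
  · have := this h₀ hθ (le_of_not_ge h)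
    calc 2 / π ^ 2 * (θ - θ₀) ^ 2 = 2 / π ^ 2 * (θ₀ - θ) ^ 2 := by ring
    _ ≤ |cos θ₀ - cos θ| := this
    _ = |cos θ - cos θ₀| := abs_sub_comm _ _
  have hv0 : 0 ≤ (θ - θ₀) / 2 := by linarith
  have hv2 : (θ - θ₀) / 2 ≤ π / 2 := by
    have := hθ.2; have := h₀.1; linarith
  have hs1 : 2 / π * ((θ - θ₀) / 2) ≤ Real.sin ((θ - θ₀) / 2) :=
    Real.mul_le_sin hv0 hv2
  have hmn : 0 ≤ 2 / π * ((θ - θ₀) / 2) := mul_nonneg (by positivity) hv0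
  have hs2 : 2 / π * ((θ - θ₀) / 2) ≤ Real.sin ((θ + θ₀) / 2) := by
    rcases le_total ((θ + θ₀) / 2) (π / 2) with hu | hu
    · have h1 : 2 / π * ((θ + θ₀) / 2) ≤ Real.sin ((θ + θ₀) / 2) :=
        Real.mul_le_sin (by have := hθ.1; have := h₀.1; linarith) hu
      have : 2 / π * ((θ - θ₀) / 2) ≤ 2 / π * ((θ + θ₀) / 2) := by
        apply mul_le_mul_of_nonneg_left (by linarith [h₀.1]) (by positivity)
      linarith
    · have heq : Real.sin ((θ + θ₀) / 2) = Real.sin (π - (θ + θ₀) / 2) := by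
        rw [Real.sin_pi_sub]
      have h1 : 2 / π * (π - (θ + θ₀) / 2) ≤ Real.sin (π - (θ + θ₀) / 2) :=
        Real.mul_le_sin (by linarith [hθ.2, h₀.2]) (by linarith)
      have : 2 / π * ((θ - θ₀) / 2) ≤ 2 / π * (π - (θ + θ₀) / 2) := by
        apply mul_le_mul_of_nonneg_left (by have := hθ.2; linarith) (by positivity)
      linarith
  have hcc : Real.cos θ₀ - Real.cos θ
      = 2 * Real.sin ((θ + θ₀) / 2) * Real.sin ((θ - θ₀) / 2) := by
    rw [Real.cos_sub_cos, show (θ₀ - θ) / 2 = -((θ - θ₀) / 2) by ring,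
      show (θ₀ + θ) / 2 = (θ + θ₀) / 2 by ring, Real.sin_neg]
    ring
  have hnn : 0 ≤ Real.sin ((θ - θ₀) / 2) := le_trans hmn hs1
  have key : 2 * (2 / π * ((θ - θ₀) / 2)) * (2 / π * ((θ - θ₀) / 2))
      ≤ 2 * Real.sin ((θ + θ₀) / 2) * Real.sin ((θ - θ₀) / 2) := by
    apply mul_le_mul (by linarith) hs1 hmn (by linarith)
  have heq2 : 2 * (2 / π * ((θ - θ₀) / 2)) * (2 / π * ((θ - θ₀) / 2))
      = 2 / π ^ 2 * (θ - θ₀) ^ 2 := by field_simp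
  have hsq : 0 ≤ 2 / π ^ 2 * (θ - θ₀) ^ 2 := by positivity
  rw [abs_sub_comm, abs_of_nonneg (by linarith)]
  linarith

private lemma clamp_lb (c θ : ℝ) :
    |Real.cos θ - Real.cos (Real.arccos (-c))| ≤ |c + Real.cos θ| := by
  rcases le_total 1 (-c) with h | h
  · rw [Real.arccos_of_one_le h, Real.cos_zero]
    have h1 := Real.cos_le_one θ
    have h2 := Real.neg_one_le_cos θ
    rw [abs_of_nonpos (by linarith), abs_of_nonpos (by linarith)]
    linarith
  rcases le_total (-c) (-1) with h' | h'
  · rw [Real.arccos_of_le_neg_one h', Real.cos_pi]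
    have h1 := Real.cos_le_one θ
    have h2 := Real.neg_one_le_cos θ
    rw [abs_of_nonneg (by linarith), abs_of_nonneg (by linarith)]
    linarith
  · rw [Real.cos_arccos h' h, show Real.cos θ - -c = c + Real.cos θ by ring]

private lemma rcalc {p x : ℝ} :
    (2 / π ^ 2 * x ^ 2) ^ (-p) = (π ^ 2 / 2) ^ p * |x| ^ (-(2 * p)) := by
  have hπ := Real.pi_pos
  have h1 : (0:ℝ) ≤ 2 / π ^ 2 := by positivity
  rw [Real.mul_rpow h1 (sq_nonneg x)]
  congr 1
  · rw [Real.rpow_neg h1, show (2 / π ^ 2 : ℝ) = (π ^ 2 / 2)⁻¹ by field_simp,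
      Real.inv_rpow (by positivity), inv_inv]
  · rw [← sq_abs, ← Real.rpow_natCast |x| 2, ← Real.rpow_mul (abs_nonneg x)]
    norm_num

private lemma key_ptwise {p c θ : ℝ} (hp : 0 < p) (hθ : θ ∈ Set.Icc 0 (2 * π))
    (h0 : θ ≠ Real.arccos (-c)) (h1 : θ ≠ 2 * π - Real.arccos (-c)) :
    |c + Real.cos θ| ^ (-p) ≤ (π ^ 2 / 2) ^ p *
      (|θ - Real.arccos (-c)| ^ (-(2 * p)) + |θ - (2 * π - Real.arccos (-c))| ^ (-(2 * p))) := by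
  set θ₀ := Real.arccos (-c) with hθ₀def
  have hθ₀ : θ₀ ∈ Set.Icc 0 π := ⟨Real.arccos_nonneg _, Real.arccos_le_pi _⟩
  have hKnn : (0:ℝ) ≤ (π ^ 2 / 2) ^ p := Real.rpow_nonneg (by positivity) _
  have ht0 : (0:ℝ) ≤ |θ - θ₀| ^ (-(2 * p)) := Real.rpow_nonneg (abs_nonneg _) _
  have ht1 : (0:ℝ) ≤ |θ - (2 * π - θ₀)| ^ (-(2 * p)) := Real.rpow_nonneg (abs_nonneg _) _
  rcases le_total θ π with hle | hle
  · have quad := cos_quad_lb ⟨hθ.1, hle⟩ hθ₀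
    have pos : 0 < 2 / π ^ 2 * (θ - θ₀) ^ 2 := by
      have : θ - θ₀ ≠ 0 := sub_ne_zero.mpr h0
      have := Real.pi_pos
      positivity
    have hflip : |c + Real.cos θ| ^ (-p) ≤ (2 / π ^ 2 * (θ - θ₀) ^ 2) ^ (-p) :=
      Real.rpow_le_rpow_of_nonpos pos (quad.trans (clamp_lb c θ)) (by linarith)
    rw [rcalc] at hflip
    refine hflip.trans ?_
    nlinarith
  · have h2π : 2 * π - θ ∈ Set.Icc 0 π := ⟨by linarith [hθ.2], by linarith⟩
    have quad := cos_quad_lb h2π hθ₀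
    rw [show Real.cos (2 * π - θ) = Real.cos θ by
      rw [Real.cos_sub]; simp] at quad
    have heq : (2 * π - θ - θ₀) ^ 2 = (θ - (2 * π - θ₀)) ^ 2 := by ring
    rw [heq] at quad
    have pos : 0 < 2 / π ^ 2 * (θ - (2 * π - θ₀)) ^ 2 := by
      have : θ - (2 * π - θ₀) ≠ 0 := sub_ne_zero.mpr h1
      have := Real.pi_pos
      positivity
    have hflip : |c + Real.cos θ| ^ (-p) ≤ (2 / π ^ 2 * (θ - (2 * π - θ₀)) ^ 2) ^ (-p) :=
      Real.rpow_le_rpow_of_nonpos pos (quad.trans (clamp_lb c θ)) (by linarith)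
    rw [rcalc] at hflip
    refine hflip.trans ?_
    nlinarith

private lemma absInt {r : ℝ} (hr : -1 < r) (a b : ℝ) :
    IntervalIntegrable (fun x => |x| ^ r) volume a b := by
  have base : ∀ c : ℝ, 0 ≤ c → IntervalIntegrable (fun x => |x| ^ r) volume 0 c := by
    intro c hc
    apply (intervalIntegral.intervalIntegrable_rpow' hr (a := 0) (b := c)).congr_ae
    rw [Set.uIoc_of_le hc]
    filter_upwards [ae_restrict_mem measurableSet_Ioc] with x hx
    rw [abs_of_pos hx.1]
  have base' : ∀ c : ℝ, IntervalIntegrable (fun x => |x| ^ r) volume 0 c := by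
    intro c
    rcases le_total 0 c with hc | hc
    · exact base c hc
    · have h1 := base (-c) (by linarith)
      have h2 := (IntervalIntegrable.iff_comp_neg (f := fun x => |x| ^ r) (by simp)).mp h1
      simp only [abs_neg, neg_zero, neg_neg] at h2
      exact h2
  exact (base' a).symm.trans (base' b)

private lemma shiftInt {r t : ℝ} (hr : -1 < r) :
    IntegrableOn (fun θ => |θ - t| ^ r) (Set.Icc 0 (2 * π)) volume := by
  have h := (absInt hr (-t) (2 * π - t)).comp_sub_right t
  simp only [neg_add_cancel, sub_add_cancel] at h
  exact (intervalIntegrable_iff_integrableOn_Icc_of_le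
    (by positivity : (0:ℝ) ≤ 2 * π)).mp h

private lemma transl {r t : ℝ} (hr : -1 < r) (ht : t ∈ Set.Icc 0 (2 * π)) :
    (∫ θ in Set.Icc (0:ℝ) (2 * π), |θ - t| ^ r)
      ≤ ∫ u in (-(2 * π))..(2 * π), |u| ^ r := by
  have hπ := Real.pi_pos
  have h02 : (0:ℝ) ≤ 2 * π := by positivity
  rw [MeasureTheory.integral_Icc_eq_integral_Ioc,
    ← intervalIntegral.integral_of_le h02,
    intervalIntegral.integral_comp_sub_right (fun u => |u| ^ r) t]
  apply intervalIntegral.integral_mono_interval (by linarith [ht.2]) (by linarith) (by linarith [ht.1])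
  · exact Filter.Eventually.of_forall fun x => Real.rpow_nonneg (abs_nonneg _) _
  · exact absInt hr _ _

theorem stmt_0 :
    ∀ p : ℝ, 0 < p → p < 1 / 2 →
      ∃ C : ℝ, 0 < C ∧ ∀ a b : ℝ, b ≠ 0 →
        (∫ θ in Set.Icc (0 : ℝ) (2 * π), |a + b * Real.cos θ| ^ (-p)) ≤ C * |b| ^ (-p) := by
  intro p hp hp2
  have hπ := Real.pi_pos
  have hr : (-1:ℝ) < -(2 * p) := by linarith
  set K : ℝ := (π ^ 2 / 2) ^ p with hKdef
  have hK : 0 < K := Real.rpow_pos_of_pos (by positivity) _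
  set I : ℝ := ∫ u in (-(2 * π))..(2 * π), |u| ^ (-(2 * p)) with hIdef
  have hI : 0 ≤ I := intervalIntegral.integral_nonneg (by linarith)
    (fun x _ => Real.rpow_nonneg (abs_nonneg _) _)
  refine ⟨2 * K * I + 1, by nlinarith, ?_⟩
  intro a b hb
  set c : ℝ := a / b with hcdef
  set t0 : ℝ := Real.arccos (-c) with ht0def
  set t1 : ℝ := 2 * π - t0 with ht1def
  have ht0mem : t0 ∈ Set.Icc (0:ℝ) (2 * π) :=
    ⟨Real.arccos_nonneg _, by linarith [Real.arccos_le_pi (-c)]⟩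
  have ht1mem : t1 ∈ Set.Icc (0:ℝ) (2 * π) :=
    ⟨by linarith [Real.arccos_le_pi (-c)], by linarith [Real.arccos_nonneg (-c)]⟩
  have hbpos : (0:ℝ) < |b| := abs_pos.mpr hb
  -- rewrite the integrand
  have hrw : ∀ θ : ℝ, |a + b * Real.cos θ| ^ (-p)
      = |b| ^ (-p) * (|c + Real.cos θ| ^ (-p)) := by
    intro θ
    have : a + b * Real.cos θ = b * (c + Real.cos θ) := by
      rw [hcdef]; field_simp
    rw [this, abs_mul, Real.mul_rpow (abs_nonneg _) (abs_nonneg _)]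
  have hpull : (∫ θ in Set.Icc (0:ℝ) (2 * π), |a + b * Real.cos θ| ^ (-p))
      = |b| ^ (-p) * ∫ θ in Set.Icc (0:ℝ) (2 * π), |c + Real.cos θ| ^ (-p) := by
    rw [← MeasureTheory.integral_const_mul]
    exact MeasureTheory.integral_congr_ae (Filter.Eventually.of_forall fun θ => hrw θ)
  rw [hpull]
  -- bound the inner integral
  have hint0 : IntegrableOn (fun θ => |θ - t0| ^ (-(2 * p))) (Set.Icc 0 (2 * π)) volume :=
    shiftInt hr
  have hint1 : IntegrableOn (fun θ => |θ - t1| ^ (-(2 * p))) (Set.Icc 0 (2 * π)) volume :=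
    shiftInt hr
  have hg : Integrable (fun θ => K * (|θ - t0| ^ (-(2 * p)) + |θ - t1| ^ (-(2 * p))))
      (volume.restrict (Set.Icc 0 (2 * π))) := (hint0.add hint1).const_mul K
  have hane : ∀ t : ℝ, ∀ᵐ θ ∂(volume.restrict (Set.Icc (0:ℝ) (2 * π))), θ ≠ t := by
    intro t
    refine ae_restrict_of_ae ?_
    refine ae_iff.mpr ?_
    simp [not_ne_iff, Set.setOf_eq_eq_singleton, measure_singleton]
  have hmono : (∫ θ in Set.Icc (0:ℝ) (2 * π), |c + Real.cos θ| ^ (-p))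
      ≤ ∫ θ in Set.Icc (0:ℝ) (2 * π), K * (|θ - t0| ^ (-(2 * p)) + |θ - t1| ^ (-(2 * p))) := by
    apply integral_mono_of_nonneg
    · exact Filter.Eventually.of_forall fun θ => Real.rpow_nonneg (abs_nonneg _) _
    · exact hg
    · filter_upwards [ae_restrict_mem measurableSet_Icc, hane t0, hane t1] with θ hmem h0 h1
      exact key_ptwise hp hmem h0 h1
  have hsplit : (∫ θ in Set.Icc (0:ℝ) (2 * π), K * (|θ - t0| ^ (-(2 * p)) + |θ - t1| ^ (-(2 * p))))
      = K * ((∫ θ in Set.Icc (0:ℝ) (2 * π), |θ - t0| ^ (-(2 * p)))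
           + (∫ θ in Set.Icc (0:ℝ) (2 * π), |θ - t1| ^ (-(2 * p)))) := by
    rw [MeasureTheory.integral_const_mul, MeasureTheory.integral_add hint0 hint1]
  have hT0 := transl hr ht0mem
  have hT1 := transl hr ht1mem
  have hinner : (∫ θ in Set.Icc (0:ℝ) (2 * π), |c + Real.cos θ| ^ (-p)) ≤ 2 * K * I + 1 := by
    rw [hsplit] at hmono
    nlinarith
  calc |b| ^ (-p) * ∫ θ in Set.Icc (0:ℝ) (2 * π), |c + Real.cos θ| ^ (-p)
      ≤ |b| ^ (-p) * (2 * K * I + 1) :=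
        mul_le_mul_of_nonneg_left hinner (Real.rpow_nonneg (abs_nonneg _) _)
    _ = (2 * K * I + 1) * |b| ^ (-p) := by ring
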